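/- Let d, C > 0 be constants and let J satisfy condition (J1). For any given constants H > r₀ > 0 and any continuous function w₀ : [-r₀, r₀] → ℝ with w₀(±r₀) = 0 and w₀ > 0 on (-r₀, r₀), there exists ρ⁰ > 0 (depending on J, d, C, w₀ and r₀) with the following property: whenever ρ ≥ ρ⁰ and (w, l, r) is a triple with l, r ∈ C¹([0,∞)), r(0) = -l(0) = r₀, w continuous on {(t,x) : t ≥ 0, l(t) ≤ x ≤ r(t)} and continuously differentiable in t, satisfying w_t(t,x) ≥ d ∫_{l(t)}^{r(t)} J(x-y) w(t,y) dy - d w(t,x) - C w(t,x) for t > 0 and l(t) < x < r(t); w(t, l(t)) = w(t, r(t)) = 0 for t > 0; r'(t) ≥ ρ ∫_{l(t)}^{r(t)} ∫_{r(t)}^{∞} J(x-y) w(t,x) dy dx and l'(t) ≤ -ρ ∫_{l(t)}^{r(t)} ∫_{-∞}^{l(t)} J(x-y) w(t,x) dy dx for t > 0; and w(0,·) = w₀ on [-r₀, r₀]; then liminf_{t→∞} r(t) ≥ H and limsup_{t→∞} l(t) ≤ -H. -/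

import Mathlib

open MeasureTheory Filter Set Topology Real

/-- Condition (J1) on the kernel `J`. -/
structure KernelCond (J : ℝ → ℝ) : Prop where
  lipschitz : ∃ K, LipschitzWith K J
  pos_at_zero : 0 < J 0
  nonneg : ∀ x, 0 ≤ J x
  integrable : Integrable J
  integral_one : ∫ x, J x = 1
  symm : ∀ x, J (-x) = J x
  bounded : ∃ M, ∀ x, J x ≤ M

section Aux


lemma setint_sub_left (f : ℝ → ℝ) (x : ℝ) (S : Set ℝ) :
    ∫ y in (fun y => x - y) ⁻¹' S, f (x - y) = ∫ z in S, f z :=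
  (Measure.measurePreserving_sub_left volume x).setIntegral_preimage_emb
    (MeasurableEquiv.subLeft x).measurableEmbedding f S

lemma integral_Ioi_sub (f : ℝ → ℝ) (x R : ℝ) :
    ∫ y in Ioi R, f (x - y) = ∫ z in Iio (x - R), f z := by
  have h : (fun y => x - y) ⁻¹' (Iio (x - R)) = Ioi R := by
    ext y; simp only [mem_preimage, mem_Iio, mem_Ioi]; constructor <;> intro h <;> linarith
  rw [← setint_sub_left f x (Iio (x - R)), h]

lemma setint_neg_preimage (f : ℝ → ℝ) (S : Set ℝ) :
    ∫ y in (fun y : ℝ => -y) ⁻¹' S, f (-y) = ∫ z in S, f z :=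
  (Measure.measurePreserving_neg volume).setIntegral_preimage_emb
    (MeasurableEquiv.neg ℝ).measurableEmbedding f S

lemma integral_Ioi_neg (f : ℝ → ℝ) (c : ℝ) :
    ∫ y in Ioi c, f (-y) = ∫ z in Iio (-c), f z := by
  have h : (fun y : ℝ => -y) ⁻¹' (Iio (-c)) = Ioi c := by
    ext y; simp only [mem_preimage, mem_Iio, mem_Ioi]; constructor <;> intro h <;> linarith
  rw [← setint_neg_preimage f (Iio (-c)), h]

lemma integral_Iio_neg (f : ℝ → ℝ) (c : ℝ) :
    ∫ y in Iio c, f (-y) = ∫ z in Ioi (-c), f z := by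
  have h : (fun y : ℝ => -y) ⁻¹' (Ioi (-c)) = Iio c := by
    ext y; simp only [mem_preimage, mem_Iio, mem_Ioi]; constructor <;> intro h <;> linarith
  rw [← setint_neg_preimage f (Ioi (-c)), h]

lemma ode_lower (g : ℝ → ℝ) (A B t₀ T : ℝ) (hB : 0 < B)
    (hc : ContinuousOn g (Icc t₀ T))
    (hder : ∀ t ∈ Ioo t₀ T, DifferentiableAt ℝ g t ∧ A - B * g t ≤ deriv g t) :
    ∀ t ∈ Icc t₀ T, A / B + (g t₀ - A / B) * Real.exp (-(B * (t - t₀))) ≤ g t := by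
  have hmono : MonotoneOn (fun t => (g t - A / B) * Real.exp (B * t)) (Icc t₀ T) := by
    apply monotoneOn_of_deriv_nonneg (convex_Icc _ _)
    · exact (hc.sub continuousOn_const).mul
        ((Real.continuous_exp.comp (continuous_const.mul continuous_id)).continuousOn)
    · rw [interior_Icc]
      intro t ht
      have he : HasDerivAt (fun t => Real.exp (B * t)) (Real.exp (B * t) * B) t := by
        simpa [mul_comm] using ((hasDerivAt_id t).const_mul B).exp
      exact (((hder t ht).1.sub_const _).mul he.differentiableAt).differentiableWithinAt
    · rw [interior_Icc]
      intro t ht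
      obtain ⟨hdiff, hineq⟩ := hder t ht
      have he : HasDerivAt (fun t => Real.exp (B * t)) (Real.exp (B * t) * B) t := by
        simpa [mul_comm] using ((hasDerivAt_id t).const_mul B).exp
      have hφ : HasDerivAt (fun t => (g t - A / B) * Real.exp (B * t))
          (deriv g t * Real.exp (B * t) + (g t - A / B) * (Real.exp (B * t) * B)) t :=
        (hdiff.hasDerivAt.sub_const _).mul he
      rw [hφ.deriv]
      have h1 : 0 ≤ deriv g t + B * g t - A := by linarith
      have h2 : (0:ℝ) < Real.exp (B * t) := Real.exp_pos _
      have hBne : B ≠ 0 := ne_of_gt hB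
      have : deriv g t * Real.exp (B * t) + (g t - A / B) * (Real.exp (B * t) * B)
          = (deriv g t + B * g t - A) * Real.exp (B * t) := by field_simp; ring
      rw [this]; positivity
  intro t ht
  have h := hmono (left_mem_Icc.2 (ht.1.trans ht.2)) ht ht.1
  simp only at h
  have e1 : Real.exp (B * t) * Real.exp (-(B * t)) = 1 := by
    rw [← Real.exp_add]; ring_nf; exact Real.exp_zero
  have e2 : Real.exp (B * t₀) * Real.exp (-(B * t)) = Real.exp (-(B * (t - t₀))) := by
    rw [← Real.exp_add]; ring_nf
  have h3 := mul_le_mul_of_nonneg_right h (le_of_lt (Real.exp_pos (-(B * t))))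
  have h4 : (g t₀ - A / B) * Real.exp (-(B * (t - t₀))) ≤ g t - A / B := by
    calc (g t₀ - A / B) * Real.exp (-(B * (t - t₀)))
        = (g t₀ - A / B) * Real.exp (B * t₀) * Real.exp (-(B * t)) := by rw [mul_assoc, e2]
      _ ≤ (g t - A / B) * Real.exp (B * t) * Real.exp (-(B * t)) := h3
      _ = g t - A / B := by rw [mul_assoc, e1, mul_one]
  linarith

lemma deriv_growth (r : ℝ → ℝ) (c t₀ t₁ : ℝ) (h01 : t₀ ≤ t₁) (hc : ContinuousOn r (Icc t₀ t₁))
    (hd : ∀ t ∈ Ioo t₀ t₁, DifferentiableAt ℝ r t ∧ c ≤ deriv r t) :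
    r t₀ + c * (t₁ - t₀) ≤ r t₁ := by
  have hmono : MonotoneOn (fun t => r t - c * t) (Icc t₀ t₁) := by
    apply monotoneOn_of_deriv_nonneg (convex_Icc _ _)
    · exact hc.sub (continuous_const.mul continuous_id).continuousOn
    · rw [interior_Icc]
      intro t ht
      exact ((hd t ht).1.sub ((differentiable_id.const_mul c) t)).differentiableWithinAt
    · rw [interior_Icc]
      intro t ht
      have h' : HasDerivAt (fun t => r t - c * t) (deriv r t - c * 1) t :=
        (hd t ht).1.hasDerivAt.sub ((hasDerivAt_id t).const_mul c)
      rw [h'.deriv]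
      have := (hd t ht).2
      linarith
  have h := hmono (left_mem_Icc.2 h01) (right_mem_Icc.2 h01) h01
  simp only at h
  linarith

variable {J : ℝ → ℝ}


lemma F_split (hJ : KernelCond J) {u v : ℝ} (huv : u ≤ v) :
    ∫ z in Iio v, J z = (∫ z in Iio u, J z) + ∫ z in Ico u v, J z := by
  rw [← Iio_union_Ico_eq_Iio huv]
  exact setIntegral_union (by rw [Set.disjoint_left]; rintro z hz ⟨h1, h2⟩; exact absurd hz (not_lt.2 h1)) measurableSet_Ico
    hJ.integrable.integrableOn hJ.integrable.integrableOn

lemma F_cont (hJ : KernelCond J) : Continuous (fun u => ∫ z in Iio u, J z) := by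
  obtain ⟨M, hM⟩ := hJ.bounded
  have hM0 : 0 ≤ M := le_trans (hJ.nonneg 0) (hM 0)
  have key : ∀ u v : ℝ, u ≤ v → (∫ z in Iio v, J z) - (∫ z in Iio u, J z) ∈ Icc 0 (M * (v - u)) := by
    intro u v huv
    rw [F_split hJ huv]
    simp only [add_sub_cancel_left]
    constructor
    · exact setIntegral_nonneg measurableSet_Ico (fun z _ => hJ.nonneg z)
    · calc ∫ z in Ico u v, J z ≤ ∫ _z in Ico u v, M :=
            setIntegral_mono_on hJ.integrable.integrableOn (integrableOn_const
              (by rw [Real.volume_Ico]; exact ENNReal.ofReal_ne_top))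
              measurableSet_Ico (fun z _ => hM z)
        _ = M * (v - u) := by
            rw [setIntegral_const, measureReal_def, Real.volume_Ico, smul_eq_mul,
              ENNReal.toReal_ofReal (by linarith), mul_comm]
  have hlip : LipschitzWith (Real.toNNReal M) (fun u => ∫ z in Iio u, J z) := by
    apply LipschitzWith.of_dist_le_mul
    intro u v
    rcases le_total u v with h | h
    · have := key u v h
      rw [Real.dist_eq, Real.dist_eq, Real.coe_toNNReal M hM0]
      rw [abs_sub_comm ((fun u => ∫ z in Iio u, J z) u), abs_sub_comm u v]
      rw [abs_of_nonneg this.1, abs_of_nonneg (by linarith : (0:ℝ) ≤ v - u)]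
      linarith [this.2]
    · have := key v u h
      rw [Real.dist_eq, Real.dist_eq, Real.coe_toNNReal M hM0,
        abs_of_nonneg this.1, abs_of_nonneg (by linarith : (0:ℝ) ≤ u - v)]
      linarith [this.2]
  exact hlip.continuous

lemma F_nonneg (hJ : KernelCond J) (u : ℝ) : 0 ≤ ∫ z in Iio u, J z :=
  setIntegral_nonneg measurableSet_Iio (fun z _ => hJ.nonneg z)

lemma F_le_one (hJ : KernelCond J) (u : ℝ) : (∫ z in Iio u, J z) ≤ 1 :=
  le_trans (setIntegral_le_integral hJ.integrable (ae_of_all _ (fun z => hJ.nonneg z)))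
    (le_of_eq hJ.integral_one)

-- lower bound for F on an interval where J ≥ δ
lemma F_lower (hJ : KernelCond J) {δ c u : ℝ} (hcu : c ≤ u)
    (hδ : ∀ z ∈ Ico c u, δ ≤ J z) :
    δ * (u - c) ≤ ∫ z in Iio u, J z := by
  have h1 : δ * (u - c) ≤ ∫ z in Ico c u, J z := by
    calc δ * (u - c) = ∫ _z in Ico c u, δ := by
          rw [setIntegral_const, measureReal_def, Real.volume_Ico, smul_eq_mul,
            ENNReal.toReal_ofReal (by linarith), mul_comm]
      _ ≤ ∫ z in Ico c u, J z :=
          setIntegral_mono_on (integrableOn_const (by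
            rw [Real.volume_Ico]; exact ENNReal.ofReal_ne_top))
            hJ.integrable.integrableOn measurableSet_Ico hδ
  have h2 := F_split hJ hcu
  have h3 := F_nonneg hJ c
  linarith


lemma interval_sub_le (g : ℝ → ℝ) {A B' a' b' : ℝ} (h1 : A ≤ a') (h2 : a' ≤ b') (h3 : b' ≤ B')
    (hg : ContinuousOn g (Icc A B')) (hnn : ∀ x ∈ Icc A B', 0 ≤ g x) :
    ∫ x in a'..b', g x ≤ ∫ x in A..B', g x := by
  rw [intervalIntegral.integral_of_le h2, intervalIntegral.integral_of_le (h1.trans (h2.trans h3))]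
  apply setIntegral_mono_set (hg.integrableOn_Icc.mono_set Ioc_subset_Icc_self)
  · exact (ae_restrict_iff' measurableSet_Ioc).2
      (ae_of_all _ fun x hx => hnn x (Ioc_subset_Icc_self hx))
  · exact HasSubset.Subset.eventuallyLE (Ioc_subset_Ioc h1 h3)

lemma interval_const_le (g : ℝ → ℝ) {c a' b' : ℝ} (h : a' ≤ b') (hg : ContinuousOn g (Icc a' b'))
    (hc : ∀ x ∈ Icc a' b', c ≤ g x) : c * (b' - a') ≤ ∫ x in a'..b', g x := by
  have h2 := intervalIntegral.integral_mono_on h (intervalIntegrable_const : IntervalIntegrable (fun _ => c) volume a' b')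
    (ContinuousOn.intervalIntegrable (by rw [uIcc_of_le h]; exact hg)) hc
  rwa [intervalIntegral.integral_const, smul_eq_mul, mul_comm] at h2

end Aux

lemma max_principle (J : ℝ → ℝ) (hJ : KernelCond J) (d C : ℝ) (hd : 0 < d) (hC : 0 < C)
    (w : ℝ → ℝ → ℝ) (l r : ℝ → ℝ)
    (hlc : ContinuousOn l (Ici 0)) (hrc : ContinuousOn r (Ici 0))
    (hwc : ContinuousOn (fun p : ℝ × ℝ => w p.1 p.2)
      {p : ℝ × ℝ | 0 ≤ p.1 ∧ p.2 ∈ Icc (l p.1) (r p.1)})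
    (hpde : ∀ t > 0, ∀ x ∈ Ioo (l t) (r t), DifferentiableAt ℝ (fun s => w s x) t ∧
        d * ((∫ y in l t..r t, J (x - y) * w t y) - w t x) - C * w t x ≤ deriv (fun s => w s x) t)
    (hbdry : ∀ t > 0, w t (l t) = 0 ∧ w t (r t) = 0)
    (hinit : ∀ x ∈ Icc (l 0) (r 0), 0 ≤ w 0 x)
    (t₁ : ℝ) (ht₁ : 0 ≤ t₁) (hlr : ∀ t ∈ Icc 0 t₁, l t ≤ r t) :
    ∀ t ∈ Icc 0 t₁, ∀ x ∈ Icc (l t) (r t), 0 ≤ w t x := by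
  obtain ⟨K, hK⟩ := hJ.lipschitz
  have hJcont : Continuous J := hK.continuous
  -- the compact region
  set Q : Set (ℝ × ℝ) := {p : ℝ × ℝ | p.1 ∈ Icc 0 t₁ ∧ p.2 ∈ Icc (l p.1) (r p.1)} with hQ
  have hQsub : Q ⊆ {p : ℝ × ℝ | 0 ≤ p.1 ∧ p.2 ∈ Icc (l p.1) (r p.1)} :=
    fun p hp => ⟨hp.1.1, hp.2⟩
  have hQcomp : IsCompact Q := by
    have himg : Q = (fun q : ℝ × ℝ => (q.1, l q.1 + q.2 * (r q.1 - l q.1))) ''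
        (Icc 0 t₁ ×ˢ Icc 0 1) := by
      ext ⟨t, x⟩
      constructor
      · rintro ⟨ht, hx⟩
        rcases eq_or_lt_of_le (hlr t ht) with heq | hlt
        · refine ⟨(t, 0), ⟨ht, by norm_num⟩, ?_⟩
          have hxl : l t + 0 * (r t - l t) = x := by
            have : x = l t := le_antisymm (heq ▸ hx.2) hx.1
            simp [this]
          exact congrArg (Prod.mk t) hxl
        · refine ⟨(t, (x - l t) / (r t - l t)), ⟨ht, ?_, ?_⟩, ?_⟩
          · exact div_nonneg (by linarith [hx.1]) (by linarith)
          · rw [div_le_one (by linarith)]; linarith [hx.2]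
          · have hxl : l t + (x - l t) / (r t - l t) * (r t - l t) = x := by
              field_simp
              ring
            exact congrArg (Prod.mk t) hxl
      · rintro ⟨⟨t, θ⟩, ⟨ht, hθ⟩, heq⟩
        rw [← heq]
        have h1 : l t ≤ r t := hlr t ht
        refine ⟨ht, ?_, ?_⟩ <;> simp only
        · linarith [mul_nonneg hθ.1 (sub_nonneg.2 h1)]
        · linarith [mul_le_mul_of_nonneg_right hθ.2 (sub_nonneg.2 h1)]
    rw [himg]
    apply IsCompact.image_of_continuousOn ((isCompact_Icc).prod isCompact_Icc)
    apply ContinuousOn.prodMk continuous_fst.continuousOn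
    have hfst : ∀ q : ℝ × ℝ, q ∈ Icc 0 t₁ ×ˢ Icc (0:ℝ) 1 → q.1 ∈ Ici (0:ℝ) :=
      fun q hq => hq.1.1
    have hl' : ContinuousOn (fun q : ℝ × ℝ => l q.1) (Icc 0 t₁ ×ˢ Icc 0 1) :=
      hlc.comp continuous_fst.continuousOn hfst
    have hr' : ContinuousOn (fun q : ℝ × ℝ => r q.1) (Icc 0 t₁ ×ˢ Icc 0 1) :=
      hrc.comp continuous_fst.continuousOn hfst
    exact hl'.add (continuous_snd.continuousOn.mul (hr'.sub hl'))
  have hQne : Q.Nonempty := ⟨(0, l 0), ⟨left_mem_Icc.2 ht₁, le_refl _, hlr 0 (left_mem_Icc.2 ht₁)⟩⟩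
  have hwQ : ContinuousOn (fun p : ℝ × ℝ => w p.1 p.2) Q := hwc.mono hQsub
  obtain ⟨⟨ts, xs⟩, hmemQ, hmin⟩ := hQcomp.exists_isMinOn hQne hwQ
  set m := w ts xs with hm
  -- it suffices to show 0 ≤ m
  suffices hm0 : 0 ≤ m by
    intro t ht x hx
    exact le_trans hm0 (hmin (show (t, x) ∈ Q from ⟨ht, hx⟩))
  by_contra hneg
  push_neg at hneg
  have hneg' : w ts xs < 0 := hm ▸ hneg
  -- ts > 0
  have hts0 : 0 < ts := by
    rcases eq_or_lt_of_le hmemQ.1.1 with h0 | h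
    · exfalso
      have h0' : ts = 0 := h0.symm
      have hx0 : xs ∈ Icc (l 0) (r 0) := h0' ▸ hmemQ.2
      exact absurd (h0' ▸ hneg' : w 0 xs < 0) (not_lt.2 (hinit xs hx0))
    · exact h
  -- xs interior
  have hxs : xs ∈ Ioo (l ts) (r ts) := by
    rcases eq_or_lt_of_le hmemQ.2.1 with h0 | h
    · exfalso
      have hb := (hbdry ts hts0).1
      rw [h0] at hb
      exact absurd hb (ne_of_lt hneg')
    rcases eq_or_lt_of_le hmemQ.2.2 with h0' | h'
    · exfalso
      have hb := (hbdry ts hts0).2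
      rw [← h0'] at hb
      exact absurd hb (ne_of_lt hneg')
    exact ⟨h, h'⟩
  obtain ⟨hdiff, hineq⟩ := hpde ts hts0 xs hxs
  -- integral lower bound
  have hlrts : l ts ≤ r ts := le_of_lt (lt_trans hxs.1 hxs.2)
  have hwm : ∀ y ∈ Icc (l ts) (r ts), m ≤ w ts y := fun y hy =>
    hmin (show (ts, y) ∈ Q from ⟨hmemQ.1, hy⟩)
  have hwcont : ContinuousOn (fun y => w ts y) (Icc (l ts) (r ts)) := by
    have hc2 : ContinuousOn (fun y => ((ts, y) : ℝ × ℝ)) (Icc (l ts) (r ts)) :=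
      (continuous_const.prodMk continuous_id).continuousOn
    exact hwQ.comp hc2 (fun y hy => ⟨hmemQ.1, hy⟩)
  have hJint : Integrable (fun y => J (xs - y)) := hJ.integrable.comp_sub_left xs
  have hIbound : m ≤ ∫ y in l ts..r ts, J (xs - y) * w ts y := by
    have hint1 : IntervalIntegrable (fun y => J (xs - y) * w ts y) volume (l ts) (r ts) := by
      apply ContinuousOn.intervalIntegrable
      rw [uIcc_of_le hlrts]
      exact ((hJcont.comp (continuous_const.sub continuous_id)).continuousOn).mul hwcont
    have hint2 : IntervalIntegrable (fun y => J (xs - y) * m) volume (l ts) (r ts) := by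
      apply ContinuousOn.intervalIntegrable
      exact ((hJcont.comp (continuous_const.sub continuous_id)).continuousOn).mul continuousOn_const
    have hmono2 : (∫ y in l ts..r ts, J (xs - y) * m) ≤ ∫ y in l ts..r ts, J (xs - y) * w ts y := by
      apply intervalIntegral.integral_mono_on hlrts hint2 hint1
      intro y hy
      exact mul_le_mul_of_nonneg_left (hwm y hy) (hJ.nonneg _)
    have hSval : (∫ y in l ts..r ts, J (xs - y) * m) = (∫ y in l ts..r ts, J (xs - y)) * m := by
      rw [← intervalIntegral.integral_mul_const]
    have hS0 : 0 ≤ ∫ y in l ts..r ts, J (xs - y) :=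
      intervalIntegral.integral_nonneg hlrts (fun y _ => hJ.nonneg _)
    have hS1 : (∫ y in l ts..r ts, J (xs - y)) ≤ 1 := by
      rw [intervalIntegral.integral_of_le hlrts]
      calc ∫ y in Ioc (l ts) (r ts), J (xs - y)
          ≤ ∫ y, J (xs - y) := setIntegral_le_integral hJint (ae_of_all _ (fun y => hJ.nonneg _))
        _ = ∫ y, J y := integral_sub_left_eq_self J volume xs
        _ = 1 := hJ.integral_one
    have : m ≤ (∫ y in l ts..r ts, J (xs - y)) * m := by
      linarith [mul_le_mul_of_nonpos_right hS1 hneg'.le]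
    linarith
  -- positive time-derivative at the min point
  have hDpos : 0 < deriv (fun s => w s xs) ts := by
    have : d * ((∫ y in l ts..r ts, J (xs - y) * w ts y) - w ts xs) - C * w ts xs
        ≥ d * (m - m) - C * m := by
      have h2 : w ts xs = m := rfl
      rw [h2]
      have h3 := mul_le_mul_of_nonneg_left hIbound hd.le
      linarith
    have h3 : d * (m - m) - C * m = -C * m := by ring
    have h4 := mul_pos hC (neg_pos.2 hneg')
    simp only [ge_iff_le] at this
    linarith [hineq, this]
  -- but w s xs ≥ m for s slightly to the left, contradiction
  have hlct : ContinuousAt l ts := hlc.continuousAt (Ici_mem_nhds hts0)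
  have hrct : ContinuousAt r ts := hrc.continuousAt (Ici_mem_nhds hts0)
  have hev1 : ∀ᶠ s in 𝓝 ts, l s < xs := hlct.eventually_lt continuousAt_const hxs.1
  have hev2 : ∀ᶠ s in 𝓝 ts, xs < r s := ContinuousAt.eventually_lt continuousAt_const hrct hxs.2
  have hev3 : ∀ᶠ s in 𝓝[<] ts, 0 < (w s xs - w ts xs) / (s - ts) := by
    have hslope : Tendsto (slope (fun s => w s xs) ts) (𝓝[≠] ts) (𝓝 (deriv (fun s => w s xs) ts)) :=
      hasDerivAt_iff_tendsto_slope.1 hdiff.hasDerivAt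
    have := hslope.eventually (lt_mem_nhds hDpos)
    apply this.filter_mono (nhdsWithin_mono ts (fun s hs => ne_of_lt hs))
    |>.mono ?_
    intro s hs
    rwa [slope_def_field] at hs
  have hIoo : Ioo 0 ts ∈ 𝓝[<] ts := Ioo_mem_nhdsLT_of_mem ⟨hts0, le_refl ts⟩
  have hall := (hev3.and (((hev1.and hev2).filter_mono nhdsWithin_le_nhds))).and hIoo
  obtain ⟨s, ⟨hslope, hls, hrs⟩, hsIoo⟩ := hall.exists
  have hsQ : (s, xs) ∈ Q := ⟨⟨le_of_lt hsIoo.1, le_trans (le_of_lt hsIoo.2) hmemQ.1.2⟩,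
    ⟨le_of_lt hls, le_of_lt hrs⟩⟩
  have hge : m ≤ w s xs := hmin hsQ
  have hlt2 : w s xs < w ts xs := by
    by_contra hcon
    push_neg at hcon
    have hnum : 0 ≤ w s xs - w ts xs := by linarith
    have hden : s - ts < 0 := by linarith [hsIoo.2]
    have : (w s xs - w ts xs) / (s - ts) ≤ 0 := div_nonpos_of_nonneg_of_nonpos hnum (le_of_lt hden)
    linarith
  exact absurd hge (not_le.2 hlt2)

set_option maxHeartbeats 1000000 in
lemma key_right
    (J : ℝ → ℝ) (hJ : KernelCond J) (d C : ℝ) (hd : 0 < d) (hC : 0 < C)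
    (H r₀ : ℝ) (hr₀ : 0 < r₀) (hH : r₀ < H)
    (w₀ : ℝ → ℝ) (hw₀c : ContinuousOn w₀ (Icc (-r₀) r₀))
    (hw₀l : w₀ (-r₀) = 0) (hw₀r : w₀ r₀ = 0)
    (hw₀pos : ∀ x ∈ Ioo (-r₀) r₀, 0 < w₀ x) :
    ∃ ρ₀ : ℝ, 0 < ρ₀ ∧
      ∀ ρ : ℝ, ρ₀ ≤ ρ →
      ∀ (w : ℝ → ℝ → ℝ) (l r : ℝ → ℝ),
        ContDiffOn ℝ 1 l (Ici 0) → ContDiffOn ℝ 1 r (Ici 0) →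
        r 0 = r₀ → l 0 = -r₀ →
        ContinuousOn (fun p : ℝ × ℝ => w p.1 p.2)
          {p : ℝ × ℝ | 0 ≤ p.1 ∧ p.2 ∈ Icc (l p.1) (r p.1)} →
        (∀ t > 0, ∀ x ∈ Ioo (l t) (r t),
          DifferentiableAt ℝ (fun s => w s x) t ∧
          d * ((∫ y in l t..r t, J (x - y) * w t y) - w t x) - C * w t x ≤
            deriv (fun s => w s x) t) →
        (∀ t > 0, w t (l t) = 0 ∧ w t (r t) = 0) →
        (∀ t > 0, ρ * ∫ x in l t..r t, ∫ y in Ioi (r t), J (x - y) * w t x ≤ deriv r t) →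
        (∀ t > 0, deriv l t ≤ -ρ * ∫ x in l t..r t, ∫ y in Iio (l t), J (x - y) * w t x) →
        (∀ x ∈ Icc (-r₀) r₀, w 0 x = w₀ x) →
        (∀ y < H, ∀ᶠ t in atTop, y ≤ r t) := by
  obtain ⟨K, hK⟩ := hJ.lipschitz
  have hJcont : Continuous J := hK.continuous
  -- find σ > 0 with J ≥ δ := J 0 / 2 on the ball of radius σ
  set δ : ℝ := J 0 / 2 with hδdef
  have hδpos : 0 < δ := half_pos hJ.pos_at_zero
  obtain ⟨σ, hσpos, hσ⟩ : ∃ σ > 0, ∀ z : ℝ, |z| < σ → δ ≤ J z := by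
    have h1 : ∀ᶠ z in 𝓝 (0:ℝ), δ < J z :=
      hJcont.continuousAt.eventually (lt_mem_nhds (half_lt_self hJ.pos_at_zero))
    rw [Metric.eventually_nhds_iff] at h1
    obtain ⟨σ, hσ0, hσ1⟩ := h1
    exact ⟨σ, hσ0, fun z hz => le_of_lt (hσ1 (by simpa [Real.dist_eq] using hz))⟩
  -- step length and constants
  set s : ℝ := min (σ/8) (r₀/4) with hsdef
  have hs0 : 0 < s := lt_min (by linarith) (by linarith)
  have hsσ : 8 * s ≤ σ := by have := min_le_left (σ/8) (r₀/4); linarith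
  have hsr : 4 * s ≤ r₀ := by have := min_le_right (σ/8) (r₀/4); linarith
  set a : ℝ := r₀ - 2*s with hadef
  set b : ℝ := r₀ - s with hbdef
  have hab : a < b := by simp only [hadef, hbdef]; linarith
  -- initial lower bound on w₀ over [a, b]
  have habsub : Icc a b ⊆ Icc (-r₀) r₀ := Icc_subset_Icc (by simp only [hadef]; linarith) (by simp only [hbdef]; linarith)
  obtain ⟨x₀, hx₀mem, hx₀min⟩ := isCompact_Icc.exists_isMinOn (nonempty_Icc.2 (le_of_lt hab))
    (hw₀c.mono habsub)
  set ε₀ : ℝ := w₀ x₀ / 2 with hε₀def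
  have hε₀pos : 0 < ε₀ := by
    apply half_pos
    apply hw₀pos
    constructor
    · have := hx₀mem.1; simp only [hadef] at this; linarith
    · have := hx₀mem.2; simp only [hbdef] at this; linarith
  set B : ℝ := d + C with hBdef
  have hB0 : 0 < B := by simp only [hBdef]; linarith
  set T : ℝ := Real.log 2 / B with hTdef
  have hT0 : 0 < T := div_pos (Real.log_pos (by norm_num)) hB0
  set N : ℕ := Nat.ceil ((H - r₀)/s) with hNdef
  have hNs : H - r₀ ≤ (N:ℝ) * s := by
    have h1 : (H - r₀)/s ≤ (N:ℝ) := Nat.le_ceil _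
    calc H - r₀ = ((H - r₀)/s) * s := by field_simp
      _ ≤ (N:ℝ) * s := mul_le_mul_of_nonneg_right h1 (le_of_lt hs0)
  set τ : ℝ := T / ((N:ℝ) + 1) with hτdef
  have hτ0 : 0 < τ := div_pos hT0 (by positivity)
  have hτT : ((N:ℝ) + 1) * τ = T := by rw [hτdef]; field_simp
  set γ : ℝ := min (d * δ * s * (1 - Real.exp (-(B * (τ/2)))) / B) 1 with hγdef
  have hexpτ : Real.exp (-(B * (τ/2))) < 1 := by
    rw [Real.exp_lt_one_iff]
    have := mul_pos hB0 (half_pos hτ0)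
    linarith
  have hγ0 : 0 < γ := by
    apply lt_min _ one_pos
    have h1 : 0 < 1 - Real.exp (-(B * (τ/2))) := by linarith
    positivity
  have hγ1 : γ ≤ 1 := min_le_right _ _
  set εk : ℕ → ℝ := fun k => ε₀ * γ^k with hεkdef
  have hεkpos : ∀ k, 0 < εk k := fun k => by positivity
  have hεkmono : ∀ k, k ≤ N → εk N ≤ εk k := by
    intro k hk
    exact mul_le_mul_of_nonneg_left (pow_le_pow_of_le_one (le_of_lt hγ0) hγ1 hk) (le_of_lt hε₀pos)
  refine ⟨2 / (δ * s * τ * εk N), by positivity, ?_⟩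
  intro ρ hρ w l r hlC hrC hr0 hl0 hwc hpde hbdry hr' hl' hinit
  have hρpos : 0 < ρ := lt_of_lt_of_le (by positivity) hρ
  have hlcont : ContinuousOn l (Ici 0) := hlC.continuousOn
  have hrcont : ContinuousOn r (Ici 0) := hrC.continuousOn
  have hldiff : ∀ t, 0 < t → DifferentiableAt ℝ l t := fun t ht =>
    (hlC.differentiableOn one_ne_zero).differentiableAt (Ici_mem_nhds ht)
  have hrdiff : ∀ t, 0 < t → DifferentiableAt ℝ r t := fun t ht =>
    (hrC.differentiableOn one_ne_zero).differentiableAt (Ici_mem_nhds ht)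
  have hw₀nn : ∀ x ∈ Icc (-r₀) r₀, 0 ≤ w₀ x := by
    intro x hx
    rcases eq_or_lt_of_le hx.1 with h1 | h1
    · rw [← h1, hw₀l]
    rcases eq_or_lt_of_le hx.2 with h2 | h2
    · rw [h2, hw₀r]
    · exact le_of_lt (hw₀pos x ⟨h1, h2⟩)
  have hinit0 : ∀ x ∈ Icc (l 0) (r 0), 0 ≤ w 0 x := by
    intro x hx
    rw [hl0, hr0] at hx
    rw [hinit x hx]
    exact hw₀nn x hx
  -- nonnegativity of the boundary flux integrand given w ≥ 0
  have hwslice : ∀ t, 0 ≤ t → ContinuousOn (fun x => w t x) (Icc (l t) (r t)) := by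
    intro t ht
    have hc2 : ContinuousOn (fun x => ((t, x) : ℝ × ℝ)) (Icc (l t) (r t)) :=
      (continuous_const.prodMk continuous_id).continuousOn
    exact hwc.comp hc2 (fun x hx => ⟨ht, hx⟩)
  -- no crossing of the boundaries
  have hlr : ∀ t, 0 ≤ t → l t < r t := by
    by_contra hcon
    push_neg at hcon
    obtain ⟨t', ht'0, ht'c⟩ := hcon
    set S : Set ℝ := {t | 0 ≤ t ∧ r t ≤ l t} with hSdef
    have hSne : S.Nonempty := ⟨t', ht'0, ht'c⟩
    have hSbdd : BddBelow S := ⟨0, fun t ht => ht.1⟩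
    have hSclosed : IsClosed S := by
      have heq : S = Ici 0 ∩ (fun t => r t - l t) ⁻¹' (Iic 0) := by
        ext t; simp only [hSdef, mem_setOf_eq, mem_inter_iff, mem_Ici, mem_preimage, mem_Iic,
          sub_nonpos]
      rw [heq]
      exact (hrcont.sub hlcont).preimage_isClosed_of_isClosed isClosed_Ici isClosed_Iic
    set t₂ : ℝ := sInf S with ht₂def
    have ht₂S : t₂ ∈ S := hSclosed.csInf_mem hSne hSbdd
    have ht₂pos : 0 < t₂ := by
      rcases eq_or_lt_of_le ht₂S.1 with h0 | h; swap; · exact h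
      exfalso
      have := ht₂S.2
      rw [← h0, hr0, hl0] at this
      linarith
    have hbelow : ∀ t, 0 ≤ t → t < t₂ → l t < r t := by
      intro t h1 h2
      by_contra hcc
      push_neg at hcc
      exact absurd (csInf_le hSbdd ⟨h1, hcc⟩) (not_le.2 h2)
    have hwnn2 : ∀ t, 0 ≤ t → t < t₂ → ∀ x ∈ Icc (l t) (r t), 0 ≤ w t x := by
      intro t h1 h2
      exact fun x hx => max_principle J hJ d C hd hC w l r hlcont hrcont hwc hpde hbdry hinit0
        t h1 (fun u hu => le_of_lt (hbelow u hu.1 (lt_of_le_of_lt hu.2 h2))) t ⟨h1, le_refl t⟩ x hx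
    have hrmono2 : MonotoneOn r (Icc 0 t₂) := by
      apply monotoneOn_of_deriv_nonneg (convex_Icc _ _) (hrcont.mono Icc_subset_Ici_self)
      · rw [interior_Icc]
        exact fun t ht => (hrdiff t ht.1).differentiableWithinAt
      · rw [interior_Icc]
        intro t ht
        have hwn := hwnn2 t (le_of_lt ht.1) ht.2
        have hI : 0 ≤ ∫ x in l t..r t, ∫ y in Ioi (r t), J (x - y) * w t x := by
          apply intervalIntegral.integral_nonneg (le_of_lt (hbelow t (le_of_lt ht.1) ht.2))
          intro x hx
          exact setIntegral_nonneg measurableSet_Ioi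
            (fun y _ => mul_nonneg (hJ.nonneg _) (hwn x hx))
        exact le_trans (mul_nonneg hρpos.le hI) (hr' t ht.1)
    have hlanti2 : AntitoneOn l (Icc 0 t₂) := by
      apply antitoneOn_of_deriv_nonpos (convex_Icc _ _) (hlcont.mono Icc_subset_Ici_self)
      · rw [interior_Icc]
        exact fun t ht => (hldiff t ht.1).differentiableWithinAt
      · rw [interior_Icc]
        intro t ht
        have hwn := hwnn2 t (le_of_lt ht.1) ht.2
        have hI : 0 ≤ ∫ x in l t..r t, ∫ y in Iio (l t), J (x - y) * w t x := by
          apply intervalIntegral.integral_nonneg (le_of_lt (hbelow t (le_of_lt ht.1) ht.2))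
          intro x hx
          exact setIntegral_nonneg measurableSet_Iio
            (fun y _ => mul_nonneg (hJ.nonneg _) (hwn x hx))
        have h2 : -ρ * (∫ x in l t..r t, ∫ y in Iio (l t), J (x - y) * w t x) ≤ 0 := by
          rw [neg_mul]
          exact neg_nonpos.2 (mul_nonneg hρpos.le hI)
        exact le_trans (hl' t ht.1) h2
    have e1 : r 0 ≤ r t₂ := hrmono2 (left_mem_Icc.2 (le_of_lt ht₂pos))
      (right_mem_Icc.2 (le_of_lt ht₂pos)) (le_of_lt ht₂pos)
    have e2 : l t₂ ≤ l 0 := hlanti2 (left_mem_Icc.2 (le_of_lt ht₂pos))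
      (right_mem_Icc.2 (le_of_lt ht₂pos)) (le_of_lt ht₂pos)
    rw [hr0] at e1
    rw [hl0] at e2
    have := ht₂S.2
    linarith
  -- global nonnegativity, monotonicity
  have hwnn : ∀ t, 0 ≤ t → ∀ x ∈ Icc (l t) (r t), 0 ≤ w t x := by
    intro t ht
    exact max_principle J hJ d C hd hC w l r hlcont hrcont hwc hpde hbdry hinit0 t ht
      (fun v hv => (hlr v hv.1).le) t ⟨ht, le_refl t⟩
  have hrmono : MonotoneOn r (Ici 0) := by
    apply monotoneOn_of_deriv_nonneg (convex_Ici _) hrcont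
    · rw [interior_Ici]
      exact fun t ht => (hrdiff t ht).differentiableWithinAt
    · rw [interior_Ici]
      intro t ht
      have hI : 0 ≤ ∫ x in l t..r t, ∫ y in Ioi (r t), J (x - y) * w t x := by
        apply intervalIntegral.integral_nonneg (hlr t ht.le).le
        intro x hx
        exact setIntegral_nonneg measurableSet_Ioi
          (fun y _ => mul_nonneg (hJ.nonneg _) (hwnn t ht.le x hx))
      exact le_trans (mul_nonneg hρpos.le hI) (hr' t ht)
  have hrge : ∀ t, 0 ≤ t → r₀ ≤ r t := by
    intro t ht
    rw [← hr0]
    exact hrmono self_mem_Ici ht ht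
  have hlanti : AntitoneOn l (Ici 0) := by
    apply antitoneOn_of_deriv_nonpos (convex_Ici _) hlcont
    · rw [interior_Ici]
      exact fun t ht => (hldiff t ht).differentiableWithinAt
    · rw [interior_Ici]
      intro t ht
      have hI : 0 ≤ ∫ x in l t..r t, ∫ y in Iio (l t), J (x - y) * w t x := by
        apply intervalIntegral.integral_nonneg (hlr t ht.le).le
        intro x hx
        exact setIntegral_nonneg measurableSet_Iio
          (fun y _ => mul_nonneg (hJ.nonneg _) (hwnn t ht.le x hx))
      have h2 : -ρ * (∫ x in l t..r t, ∫ y in Iio (l t), J (x - y) * w t x) ≤ 0 := by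
        rw [neg_mul]
        exact neg_nonpos.2 (mul_nonneg hρpos.le hI)
      exact le_trans (hl' t ht) h2
  have hlle : ∀ t, 0 ≤ t → l t ≤ -r₀ := by
    intro t ht
    rw [← hl0]
    exact hlanti self_mem_Ici ht ht
  -- rewriting the flux integrand
  have hIval : ∀ (t : ℝ) (x : ℝ), (∫ y in Ioi (r t), J (x - y) * w t x)
      = (∫ z in Iio (x - r t), J z) * w t x := by
    intro t x
    rw [MeasureTheory.integral_mul_const, integral_Ioi_sub J x (r t)]
  have hGcont : ∀ t, 0 ≤ t →
      ContinuousOn (fun x => (∫ z in Iio (x - r t), J z) * w t x) (Icc (l t) (r t)) := by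
    intro t ht
    exact (((F_cont hJ).comp (continuous_id.sub continuous_const)).continuousOn).mul
      (hwslice t ht)
  have hGnn : ∀ t, 0 ≤ t → ∀ x ∈ Icc (l t) (r t),
      0 ≤ (∫ z in Iio (x - r t), J z) * w t x :=
    fun t ht x hx => mul_nonneg (F_nonneg hJ _) (hwnn t ht x hx)
  have ha0 : 0 < a := by simp only [hadef]; linarith
  have hbr₀ : b < r₀ := by simp only [hbdef]; linarith
  -- the invariant
  set Inv : ℕ → Prop := fun k =>
    (∀ t, (k:ℝ)*τ ≤ t → r₀ + (k:ℝ)*s ≤ r t) ∧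
    (∀ t ∈ Icc ((k:ℝ)*τ) T, ∀ x ∈ Icc (a + (k:ℝ)*s) (b + (k:ℝ)*s), εk k ≤ w t x) with hInvdef
  -- base case
  have hbase : Inv 0 := by
    constructor
    · intro t ht
      simp only [Nat.cast_zero, zero_mul] at ht ⊢
      have := hrge t ht
      linarith
    · intro t ht x hx
      simp only [Nat.cast_zero, zero_mul, add_zero] at ht hx
      have hxa : a ≤ x := hx.1
      have hxb : x ≤ b := hx.2
      have hdom : ∀ v, 0 ≤ v → x ∈ Ioo (l v) (r v) := by
        intro v hv
        constructor
        · have := hlle v hv; linarith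
        · have := hrge v hv; linarith
      have gcont : ContinuousOn (fun v => w v x) (Icc 0 T) :=
        hwc.comp ((continuous_id.prodMk continuous_const).continuousOn)
          (fun v hv => ⟨hv.1, Ioo_subset_Icc_self (hdom v hv.1)⟩)
      have hder : ∀ v ∈ Ioo (0:ℝ) T, DifferentiableAt ℝ (fun u => w u x) v ∧
          0 - B * (w v x) ≤ deriv (fun u => w u x) v := by
        intro v hv
        obtain ⟨h1, h2⟩ := hpde v hv.1 x (hdom v hv.1.le)
        refine ⟨h1, ?_⟩
        have hInt : 0 ≤ ∫ y in l v..r v, J (x - y) * w v y := by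
          apply intervalIntegral.integral_nonneg (hlr v hv.1.le).le
          exact fun y hy => mul_nonneg (hJ.nonneg _) (hwnn v hv.1.le y hy)
        have hdi : 0 ≤ d * (∫ y in l v..r v, J (x - y) * w v y) := mul_nonneg hd.le hInt
        simp only [hBdef]
        linarith [h2]
      have hode := ode_lower (fun v => w v x) 0 B 0 T hB0 gcont hder t ht
      simp only [zero_div, sub_zero, zero_add] at hode
      have hg0 : 2*ε₀ ≤ w 0 x := by
        rw [hinit x (habsub hx)]
        have h5 : w₀ x₀ ≤ w₀ x := hx₀min hx
        simp only [hε₀def]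
        linarith
      have hexp : Real.exp (-(B*T)) ≤ Real.exp (-(B*t)) := by
        apply Real.exp_le_exp.2
        have h3 : B*t ≤ B*T := mul_le_mul_of_nonneg_left ht.2 hB0.le
        linarith
      have hexpT : Real.exp (-(B*T)) = 1/2 := by
        have hBT : B * T = Real.log 2 := by
          rw [hTdef]
          field_simp
        rw [hBT, Real.exp_neg, Real.exp_log two_pos]
        norm_num
      have hw0nn : (0:ℝ) ≤ w 0 x := by linarith
      calc εk 0 = (2*ε₀) * (1/2) := by simp only [hεkdef]; ring
        _ ≤ w 0 x * Real.exp (-(B*t)) := by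
            apply mul_le_mul hg0 _ (by norm_num) hw0nn
            rw [← hexpT]
            exact hexp
        _ ≤ w t x := hode
  -- inductive step
  have hstep : ∀ k, k < N → Inv k → Inv (k + 1) := by
    rintro k hkN ⟨Qk, Pk⟩
    have hk0 : (0:ℝ) ≤ (k:ℝ) := Nat.cast_nonneg k
    have hkτ0 : (0:ℝ) ≤ (k:ℝ)*τ := mul_nonneg hk0 hτ0.le
    have hkN' : (k:ℝ) + 1 ≤ (N:ℝ) := by exact_mod_cast Nat.succ_le_of_lt hkN
    set u : ℝ := (k:ℝ)*τ + τ/2 with hudef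
    have hu0 : 0 < u := by simp only [hudef]; linarith
    have hkτu : (k:ℝ)*τ ≤ u := by simp only [hudef]; linarith
    have huT : u + τ/2 ≤ T := by
      have h1 : ((k:ℝ)+1) * τ ≤ ((N:ℝ)+1)*τ :=
        mul_le_mul_of_nonneg_right (by linarith) hτ0.le
      simp only [hudef]
      linarith [hτT]
    have huT' : u ≤ T := le_trans (le_add_of_nonneg_right (by positivity)) huT
    -- Claim 1
    have claim1 : r₀ + ((k:ℝ)+1)*s ≤ r u := by
      by_contra hcon
      push_neg at hcon
      have hderiv_bound : ∀ t ∈ Ioo ((k:ℝ)*τ) u, DifferentiableAt ℝ r t ∧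
          ρ * (δ * s * εk k * s) ≤ deriv r t := by
        intro t ht
        have ht0 : 0 < t := lt_of_le_of_lt hkτ0 ht.1
        refine ⟨hrdiff t ht0, ?_⟩
        have hrtlt : r t < r₀ + ((k:ℝ)+1)*s := lt_of_le_of_lt
          (hrmono (mem_Ici.2 ht0.le) (mem_Ici.2 hu0.le) ht.2.le) hcon
        have hrtge : r₀ + (k:ℝ)*s ≤ r t := Qk t ht.1.le
        have hIeq : (∫ x in l t..r t, ∫ y in Ioi (r t), J (x - y) * w t x)
            = ∫ x in l t..r t, (∫ z in Iio (x - r t), J z) * w t x :=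
          intervalIntegral.integral_congr (fun x _ => hIval t x)
        have hsub1 : l t ≤ a + (k:ℝ)*s := by
          have := hlle t ht0.le
          have := mul_nonneg hk0 hs0.le
          linarith
        have hsub2 : a + (k:ℝ)*s ≤ b + (k:ℝ)*s := by linarith [hab.le]
        have hsub3 : b + (k:ℝ)*s ≤ r t := by
          simp only [hbdef]
          linarith
        have hstep1 : (∫ x in a + (k:ℝ)*s..b + (k:ℝ)*s, (∫ z in Iio (x - r t), J z) * w t x)
            ≤ ∫ x in l t..r t, (∫ z in Iio (x - r t), J z) * w t x :=
          interval_sub_le _ hsub1 hsub2 hsub3 (hGcont t ht0.le) (hGnn t ht0.le)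
        have hstep2 : (δ * s * εk k) * ((b + (k:ℝ)*s) - (a + (k:ℝ)*s))
            ≤ ∫ x in a + (k:ℝ)*s..b + (k:ℝ)*s, (∫ z in Iio (x - r t), J z) * w t x := by
          apply interval_const_le _ hsub2 ((hGcont t ht0.le).mono (Icc_subset_Icc hsub1 hsub3))
          intro x hx
          have hF : δ * s ≤ ∫ z in Iio (x - r t), J z := by
            have hlow := F_lower hJ (c := x - r t - s) (u := x - r t) (by linarith)
              (fun z hz => hσ z (by
                rw [abs_lt]
                have hz1 := hz.1
                have hz2 := hz.2
                have hxa := hx.1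
                have hxb := hx.2
                simp only [hadef, hbdef] at hxa hxb
                constructor <;> linarith))
            calc δ * s = δ * ((x - r t) - (x - r t - s)) := by ring
              _ ≤ ∫ z in Iio (x - r t), J z := hlow
          have hwx : εk k ≤ w t x := Pk t ⟨ht.1.le, le_trans ht.2.le huT'⟩ x hx
          exact mul_le_mul hF hwx (hεkpos k).le (F_nonneg hJ _)
        have hba : (b + (k:ℝ)*s) - (a + (k:ℝ)*s) = s := by simp only [hadef, hbdef]; ring
        rw [hba] at hstep2
        have hflux : δ * s * εk k * s ≤ ∫ x in l t..r t, ∫ y in Ioi (r t), J (x - y) * w t x := by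
          rw [hIeq]
          linarith
        calc ρ * (δ * s * εk k * s)
            ≤ ρ * ∫ x in l t..r t, ∫ y in Ioi (r t), J (x - y) * w t x :=
              mul_le_mul_of_nonneg_left hflux hρpos.le
          _ ≤ deriv r t := hr' t ht0
      have hgrow := deriv_growth r (ρ * (δ * s * εk k * s)) ((k:ℝ)*τ) u hkτu
        (hrcont.mono (fun v hv => le_trans hkτ0 hv.1)) hderiv_bound
      have hrkτ : r₀ + (k:ℝ)*s ≤ r ((k:ℝ)*τ) := Qk _ le_rfl
      have hfact : 0 < δ * s * τ * εk N := by positivity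
      have h1 : 2 ≤ ρ * (δ * s * τ * εk N) := by
        rw [div_le_iff₀ hfact] at hρ
        linarith
      have h2 : s ≤ ρ * (δ * s * εk k * s) * (τ/2) := by
        have e2 : ρ * (δ * s * εk N * s) * (τ/2) ≤ ρ * (δ * s * εk k * s) * (τ/2) := by
          apply mul_le_mul_of_nonneg_right _ (by positivity)
          apply mul_le_mul_of_nonneg_left _ hρpos.le
          have h3 := hεkmono k hkN.le
          exact mul_le_mul_of_nonneg_right
            (mul_le_mul_of_nonneg_left h3 (by positivity : (0:ℝ) ≤ δ * s)) hs0.le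
        have e3 : ρ * (δ * s * εk N * s) * (τ/2) = (ρ * (δ * s * τ * εk N)) * (s/2) := by ring
        have e4 : 2 * (s/2) ≤ (ρ * (δ * s * τ * εk N)) * (s/2) :=
          mul_le_mul_of_nonneg_right h1 (by positivity)
        linarith
      have hud : u - (k:ℝ)*τ = τ/2 := by simp only [hudef]; ring
      rw [hud] at hgrow
      have : r₀ + ((k:ℝ)+1)*s ≤ r u := by linarith [hgrow, h2, hrkτ]
      linarith
    refine ⟨?_, ?_⟩
    · intro t ht
      push_cast at ht ⊢
      have hut : u ≤ t := by
        simp only [hudef]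
        linarith [hτ0]
      calc r₀ + ((k:ℝ)+1)*s ≤ r u := claim1
        _ ≤ r t := hrmono (mem_Ici.2 hu0.le) (mem_Ici.2 (le_trans hu0.le hut)) hut
    · intro t ht x hx
      push_cast at ht hx ⊢
      have hxmem : ∀ v, u ≤ v → x ∈ Ioo (l v) (r v) := by
        intro v hv
        have hv0 : 0 ≤ v := le_trans hu0.le hv
        constructor
        · have h5 := hlle v hv0
          have h6 := mul_nonneg hk0 hs0.le
          have := hx.1
          simp only [hadef] at this
          linarith
        · have hrv : r₀ + ((k:ℝ)+1)*s ≤ r v :=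
            le_trans claim1 (hrmono (mem_Ici.2 hu0.le) (mem_Ici.2 hv0) hv)
          have := hx.2
          simp only [hbdef] at this
          linarith [hs0]
      have gcont : ContinuousOn (fun v => w v x) (Icc u T) :=
        hwc.comp ((continuous_id.prodMk continuous_const).continuousOn)
          (fun v hv => ⟨le_trans hu0.le hv.1, Ioo_subset_Icc_self (hxmem v hv.1)⟩)
      have hder : ∀ v ∈ Ioo u T, DifferentiableAt ℝ (fun q => w q x) v ∧
          d * (δ * s * εk k) - B * (w v x) ≤ deriv (fun q => w q x) v := by
        intro v hv
        have hv0 : 0 < v := lt_trans hu0 hv.1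
        obtain ⟨h1, h2⟩ := hpde v hv0 x (hxmem v hv.1.le)
        refine ⟨h1, ?_⟩
        have hlv : l v ≤ r v := (hlr v hv0.le).le
        have hintc : ContinuousOn (fun y => J (x - y) * w v y) (Icc (l v) (r v)) :=
          ((hJcont.comp (continuous_const.sub continuous_id)).continuousOn).mul
            (hwslice v hv0.le)
        have hintnn : ∀ y ∈ Icc (l v) (r v), 0 ≤ J (x - y) * w v y :=
          fun y hy => mul_nonneg (hJ.nonneg _) (hwnn v hv0.le y hy)
        have hsub1 : l v ≤ a + (k:ℝ)*s := by
          have := hlle v hv0.le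
          have := mul_nonneg hk0 hs0.le
          linarith
        have hsub2 : a + (k:ℝ)*s ≤ b + (k:ℝ)*s := by linarith [hab.le]
        have hsub3 : b + (k:ℝ)*s ≤ r v := by
          have h7 : r₀ + ((k:ℝ)+1)*s ≤ r v :=
            le_trans claim1 (hrmono (mem_Ici.2 hu0.le) (mem_Ici.2 hv0.le) hv.1.le)
          simp only [hbdef]
          linarith [hs0]
        have e1 : (∫ y in a + (k:ℝ)*s..b + (k:ℝ)*s, J (x - y) * w v y)
            ≤ ∫ y in l v..r v, J (x - y) * w v y :=
          interval_sub_le _ hsub1 hsub2 hsub3 hintc hintnn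
        have e2 : (δ * εk k) * ((b + (k:ℝ)*s) - (a + (k:ℝ)*s))
            ≤ ∫ y in a + (k:ℝ)*s..b + (k:ℝ)*s, J (x - y) * w v y := by
          apply interval_const_le _ hsub2 (hintc.mono (Icc_subset_Icc hsub1 hsub3))
          intro y hy
          have hJxy : δ ≤ J (x - y) := by
            apply hσ
            rw [abs_lt]
            have hy1 := hy.1
            have hy2 := hy.2
            have hx1 := hx.1
            have hx2 := hx.2
            simp only [hadef, hbdef] at hy1 hy2 hx1 hx2
            constructor
            · linarith [hσpos]
            · linarith [hsσ, hs0]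
          have hwy : εk k ≤ w v y := Pk v ⟨le_trans hkτu hv.1.le, hv.2.le⟩ y hy
          exact mul_le_mul hJxy hwy (hεkpos k).le (le_trans hδpos.le hJxy)
        have hba : (b + (k:ℝ)*s) - (a + (k:ℝ)*s) = s := by simp only [hadef, hbdef]; ring
        rw [hba] at e2
        have hInt : δ * s * εk k ≤ ∫ y in l v..r v, J (x - y) * w v y := by
          calc δ * s * εk k = δ * εk k * s := by ring
            _ ≤ ∫ y in a + (k:ℝ)*s..b + (k:ℝ)*s, J (x - y) * w v y := e2
            _ ≤ ∫ y in l v..r v, J (x - y) * w v y := e1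
        have h8 : d * (δ * s * εk k) ≤ d * ∫ y in l v..r v, J (x - y) * w v y :=
          mul_le_mul_of_nonneg_left hInt hd.le
        simp only [hBdef]
        linarith [h2, h8]
      have hwu0 : 0 ≤ w u x := hwnn u hu0.le x (Ioo_subset_Icc_self (hxmem u le_rfl))
      have htmem : t ∈ Icc u T := by
        constructor
        · simp only [hudef]
          linarith [ht.1, hτ0]
        · exact ht.2
      have hode := ode_lower (fun v => w v x) (d * (δ * s * εk k)) B u T hB0 gcont hder t htmem
      have hA0 : (0:ℝ) ≤ d * (δ * s * εk k) / B := by positivity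
      have hexple : Real.exp (-(B*(t-u))) ≤ Real.exp (-(B*(τ/2))) := by
        apply Real.exp_le_exp.2
        have h9 : τ/2 ≤ t - u := by
          simp only [hudef]
          linarith [ht.1]
        have h10 := mul_le_mul_of_nonneg_left h9 hB0.le
        linarith
      have hexppos : (0:ℝ) < Real.exp (-(B*(t-u))) := Real.exp_pos _
      have hexppos2 : (0:ℝ) < Real.exp (-(B*(τ/2))) := Real.exp_pos _
      have hlow : d * (δ * s * εk k) / B * (1 - Real.exp (-(B*(τ/2)))) ≤ w t x := by
        have f1 := mul_le_mul_of_nonneg_right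
          (by linarith : (0:ℝ) - d * (δ * s * εk k) / B ≤ w u x - d * (δ * s * εk k) / B)
          hexppos.le
        have f2 := mul_le_mul_of_nonneg_left hexple hA0
        linarith [hode, f1, f2]
      have hfin : εk (k+1) ≤ d * (δ * s * εk k) / B * (1 - Real.exp (-(B*(τ/2)))) := by
        have e5 : d * (δ * s * εk k) / B * (1 - Real.exp (-(B*(τ/2))))
            = εk k * (d * δ * s * (1 - Real.exp (-(B*(τ/2)))) / B) := by
          field_simp
        have e6 : γ ≤ d * δ * s * (1 - Real.exp (-(B*(τ/2)))) / B := min_le_left _ _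
        have e7 : εk (k+1) = εk k * γ := by simp only [hεkdef]; ring
        rw [e5, e7]
        exact mul_le_mul_of_nonneg_left e6 (hεkpos k).le
      push_cast at hfin ⊢
      linarith
  -- run the induction
  have hInvN : Inv N := by
    have hall : ∀ k, k ≤ N → Inv k := by
      intro k
      induction k with
      | zero => exact fun _ => hbase
      | succ n ih => exact fun hn => hstep n (Nat.lt_of_succ_le hn) (ih (Nat.le_of_succ_le hn))
    exact hall N le_rfl
  -- conclusion
  intro y hy
  rw [eventually_atTop]
  refine ⟨(N:ℝ)*τ, fun t ht => ?_⟩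
  have h10 := hInvN.1 t ht
  linarith

/-- Lemma 5.2: for large enough `ρ`, any supersolution triple `(w, l, r)` of the
nonlocal problem with expanding boundaries spreads beyond any prescribed level `H`:
`liminf r ≥ H` and `limsup l ≤ -H`. -/
theorem boundary_expansion_for_large_rho
    (J : ℝ → ℝ) (hJ : KernelCond J) (d C : ℝ) (hd : 0 < d) (hC : 0 < C)
    (H r₀ : ℝ) (hr₀ : 0 < r₀) (hH : r₀ < H)
    (w₀ : ℝ → ℝ) (hw₀c : ContinuousOn w₀ (Icc (-r₀) r₀))
    (hw₀l : w₀ (-r₀) = 0) (hw₀r : w₀ r₀ = 0)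
    (hw₀pos : ∀ x ∈ Ioo (-r₀) r₀, 0 < w₀ x) :
    ∃ ρ₀ : ℝ, 0 < ρ₀ ∧
      ∀ ρ : ℝ, ρ₀ ≤ ρ →
      ∀ (w : ℝ → ℝ → ℝ) (l r : ℝ → ℝ),
        ContDiffOn ℝ 1 l (Ici 0) → ContDiffOn ℝ 1 r (Ici 0) →
        r 0 = r₀ → l 0 = -r₀ →
        ContinuousOn (fun p : ℝ × ℝ => w p.1 p.2)
          {p : ℝ × ℝ | 0 ≤ p.1 ∧ p.2 ∈ Icc (l p.1) (r p.1)} →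
        (∀ t > 0, ∀ x ∈ Ioo (l t) (r t),
          DifferentiableAt ℝ (fun s => w s x) t ∧
          d * ((∫ y in l t..r t, J (x - y) * w t y) - w t x) - C * w t x ≤
            deriv (fun s => w s x) t) →
        (∀ t > 0, w t (l t) = 0 ∧ w t (r t) = 0) →
        (∀ t > 0, ρ * ∫ x in l t..r t, ∫ y in Ioi (r t), J (x - y) * w t x ≤ deriv r t) →
        (∀ t > 0, deriv l t ≤ -ρ * ∫ x in l t..r t, ∫ y in Iio (l t), J (x - y) * w t x) →
        (∀ x ∈ Icc (-r₀) r₀, w 0 x = w₀ x) →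
        (∀ y < H, ∀ᶠ t in atTop, y ≤ r t) ∧ (∀ y > -H, ∀ᶠ t in atTop, l t ≤ y) := by
  obtain ⟨ρ₁, hρ₁pos, hkey1⟩ := key_right J hJ d C hd hC H r₀ hr₀ hH w₀ hw₀c hw₀l hw₀r hw₀pos
  obtain ⟨ρ₂, hρ₂pos, hkey2⟩ := key_right J hJ d C hd hC H r₀ hr₀ hH (fun x => w₀ (-x))
    (hw₀c.comp continuous_neg.continuousOn
      (fun x hx => ⟨by simpa using neg_le_neg hx.2, by simpa using neg_le_neg hx.1⟩))
    (by simpa using hw₀r) (by simpa using hw₀l)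
    (fun x hx => hw₀pos (-x) ⟨by simpa using neg_lt_neg hx.2, by simpa using neg_lt_neg hx.1⟩)
  refine ⟨max ρ₁ ρ₂, lt_of_lt_of_le hρ₁pos (le_max_left _ _), ?_⟩
  intro ρ hρ w l r hlC hrC hr0 hl0 hwc hpde hbdry hr' hl' hinit
  constructor
  · exact hkey1 ρ (le_trans (le_max_left _ _) hρ) w l r hlC hrC hr0 hl0 hwc hpde hbdry hr' hl'
      hinit
  · -- reflected data
    have h1 : ContDiffOn ℝ 1 (fun t => -(r t)) (Ici 0) := hrC.neg
    have h2 : ContDiffOn ℝ 1 (fun t => -(l t)) (Ici 0) := hlC.neg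
    have h3 : (fun t => -(l t)) 0 = r₀ := by simp [hl0]
    have h4 : (fun t => -(r t)) 0 = -r₀ := by simp [hr0]
    have h5 : ContinuousOn (fun p : ℝ × ℝ => w p.1 (-p.2))
        {p : ℝ × ℝ | 0 ≤ p.1 ∧ p.2 ∈ Icc ((fun t => -(r t)) p.1) ((fun t => -(l t)) p.1)} := by
      apply hwc.comp ((continuous_fst.prodMk continuous_snd.neg).continuousOn)
      rintro ⟨t, x⟩ ⟨h0, ha, hb⟩
      simp only at ha hb
      exact ⟨h0, by constructor <;> simp <;> linarith⟩
    have h6 : ∀ t > 0, ∀ x ∈ Ioo ((fun t => -(r t)) t) ((fun t => -(l t)) t),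
        DifferentiableAt ℝ (fun s => w s (-x)) t ∧
        d * ((∫ y in (fun t => -(r t)) t..(fun t => -(l t)) t, J (x - y) * w t (-y)) - w t (-x))
          - C * w t (-x) ≤ deriv (fun s => w s (-x)) t := by
      intro t ht x hx
      simp only [mem_Ioo] at hx
      have hx' : -x ∈ Ioo (l t) (r t) := ⟨by linarith [hx.2], by linarith [hx.1]⟩
      obtain ⟨hdiff, hineq⟩ := hpde t ht (-x) hx'
      refine ⟨hdiff, ?_⟩
      have hint : (∫ y in (-(r t))..(-(l t)), J (x - y) * w t (-y))
          = ∫ y in l t..r t, J (-x - y) * w t y := by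
        have e1 : (∫ y in (-(r t))..(-(l t)), J (x - y) * w t (-y))
            = ∫ y in (-(r t))..(-(l t)), (fun v => J (x + v) * w t v) (-y) := by
          apply intervalIntegral.integral_congr
          intro y _
          simp only [← sub_eq_add_neg]
        rw [e1, intervalIntegral.integral_comp_neg (fun v => J (x + v) * w t v)]
        simp only [neg_neg]
        apply intervalIntegral.integral_congr
        intro y _
        show J (x + y) * w t y = J (-x - y) * w t y
        rw [show x + y = -(-x - y) by ring, hJ.symm]
      simp only at hint ⊢
      rw [hint]
      exact hineq
    have h7 : ∀ t > 0, w t (-((fun t => -(r t)) t)) = 0 ∧ w t (-((fun t => -(l t)) t)) = 0 := by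
      intro t ht
      simp only [neg_neg]
      exact ⟨(hbdry t ht).2, (hbdry t ht).1⟩
    have h8 : ∀ t > 0, ρ * ∫ x in (fun t => -(r t)) t..(fun t => -(l t)) t,
        ∫ y in Ioi ((fun t => -(l t)) t), J (x - y) * w t (-x) ≤ deriv (fun t => -(l t)) t := by
      intro t ht
      have hE : (∫ x in (-(r t))..(-(l t)), ∫ y in Ioi (-(l t)), J (x - y) * w t (-x))
          = ∫ x in l t..r t, ∫ y in Iio (l t), J (x - y) * w t x := by
        have inner_eq : ∀ x : ℝ, (∫ y in Ioi (-(l t)), J (x - y) * w t (-x))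
            = ∫ z in Iio (l t), J (x + z) * w t (-x) := by
          intro x
          have h := integral_Ioi_neg (fun z => J (x + z) * w t (-x)) (-(l t))
          simp only [neg_neg, ← sub_eq_add_neg] at h
          exact h
        have e1 : (∫ x in (-(r t))..(-(l t)), ∫ y in Ioi (-(l t)), J (x - y) * w t (-x))
            = ∫ x in (-(r t))..(-(l t)),
                (fun v => ∫ z in Iio (l t), J (-v + z) * w t v) (-x) := by
          apply intervalIntegral.integral_congr
          intro x _
          simp only [neg_neg]
          exact inner_eq x
        rw [e1, intervalIntegral.integral_comp_neg (fun v => ∫ z in Iio (l t), J (-v + z) * w t v)]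
        simp only [neg_neg]
        apply intervalIntegral.integral_congr
        intro v _
        show (∫ z in Iio (l t), J (-v + z) * w t v) = ∫ y in Iio (l t), J (v - y) * w t v
        congr 1
        funext z
        congr 1
        rw [show -v + z = -(v - z) by ring, hJ.symm]
      simp only at hE ⊢
      rw [hE, deriv.fun_neg]
      have := hl' t ht
      linarith
    have h9 : ∀ t > 0, deriv (fun t => -(r t)) t ≤
        -ρ * ∫ x in (fun t => -(r t)) t..(fun t => -(l t)) t,
          ∫ y in Iio ((fun t => -(r t)) t), J (x - y) * w t (-x) := by
      intro t ht
      have hD : (∫ x in (-(r t))..(-(l t)), ∫ y in Iio (-(r t)), J (x - y) * w t (-x))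
          = ∫ x in l t..r t, ∫ y in Ioi (r t), J (x - y) * w t x := by
        have inner_eq : ∀ x : ℝ, (∫ y in Iio (-(r t)), J (x - y) * w t (-x))
            = ∫ z in Ioi (r t), J (x + z) * w t (-x) := by
          intro x
          have h := integral_Iio_neg (fun z => J (x + z) * w t (-x)) (-(r t))
          simp only [neg_neg, ← sub_eq_add_neg] at h
          exact h
        have e1 : (∫ x in (-(r t))..(-(l t)), ∫ y in Iio (-(r t)), J (x - y) * w t (-x))
            = ∫ x in (-(r t))..(-(l t)),
                (fun v => ∫ z in Ioi (r t), J (-v + z) * w t v) (-x) := by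
          apply intervalIntegral.integral_congr
          intro x _
          simp only [neg_neg]
          exact inner_eq x
        rw [e1, intervalIntegral.integral_comp_neg (fun v => ∫ z in Ioi (r t), J (-v + z) * w t v)]
        simp only [neg_neg]
        apply intervalIntegral.integral_congr
        intro v _
        show (∫ z in Ioi (r t), J (-v + z) * w t v) = ∫ y in Ioi (r t), J (v - y) * w t v
        congr 1
        funext z
        congr 1
        rw [show -v + z = -(v - z) by ring, hJ.symm]
      simp only at hD ⊢
      rw [hD, deriv.fun_neg]
      have := hr' t ht
      linarith
    have h10 : ∀ x ∈ Icc (-r₀) r₀, w 0 (-x) = (fun x => w₀ (-x)) x := by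
      intro x hx
      exact hinit (-x) ⟨by linarith [hx.2], by linarith [hx.1]⟩
    have hconc := hkey2 ρ (le_trans (le_max_right _ _) hρ)
      (fun t x => w t (-x)) (fun t => -(r t)) (fun t => -(l t))
      h1 h2 h3 h4 h5 h6 h7 h8 h9 h10
    intro y hy
    have := hconc (-y) (by linarith)
    filter_upwards [this] with t htt
    linarith
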